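/- Let T be a directed tree, λ = {λ_v}_{v∈V°} a system of complex numbers, {ε_v}_{v∈V} a system of nonnegative reals, and {μ_v}_{v∈V} a system of Borel probability measures on [0,∞) satisfying, for every u ∈ V and Borel σ ⊆ [0,∞), μ_u(σ) = ∑_{v∈Chi(u)} |λ_v|² ∫_σ (1/s) dμ_v(s) + ε_u δ₀(σ). Let S_λ be the weighted shift on T with weights λ. Then: (i) for all u ∈ V and n ≥ 1, ∫_{[0,∞)} s^n dμ_u(s) = ∑_{v∈Chi^n(u)} |λ_{u|v}|²; (ii) if Chi^n(u) = ∅ for some u ∈ V and n ≥ 1, then μ_v = δ₀ for all v ∈ Des(u); (iii) the linear span of {e_u : u ∈ V} is contained in D^∞(S_λ) if and only if ∫_{[0,∞)} s^n dμ_u(s) < ∞ for all n ∈ ℤ₊ and u ∈ V; (iv) if the linear span of {e_u : u ∈ V} is contained in D^∞(S_λ), then ‖S_λ^n e_u‖² = ∫_{[0,∞)} s^n dμ_u(s) for all u ∈ V and n ∈ ℤ₊. -/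

import Mathlib

open MeasureTheory ENNReal
open scoped NNReal
noncomputable section

/-- `μ` is a representing measure of the sequence `t`. -/
def IsRepMeasure (μ : Measure ℝ≥0) (t : ℕ → ℝ) : Prop :=
  ∀ n : ℕ, Integrable (fun s : ℝ≥0 => (s : ℝ) ^ n) μ ∧ t n = ∫ s, (s : ℝ) ^ n ∂μ

/-- `t` is a Stieltjes moment sequence. -/
def IsStieltjesMoment (t : ℕ → ℝ) : Prop := ∃ μ : Measure ℝ≥0, IsRepMeasure μ t

/-- `t` is a determinate Stieltjes moment sequence. -/
def IsDetStieltjesMoment (t : ℕ → ℝ) : Prop := ∃! μ : Measure ℝ≥0, IsRepMeasure μ t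

section Operators

universe u
variable {H : Type u} [NormedAddCommGroup H] [InnerProductSpace ℂ H]

/-- The maximal domain of the composition `S ∘ T`. -/
def compDomain (S T : H →ₗ.[ℂ] H) : Submodule ℂ H where
  carrier := {x | ∃ hx : x ∈ T.domain, T ⟨x, hx⟩ ∈ S.domain}
  zero_mem' := ⟨T.domain.zero_mem, by
    have h0 : (⟨0, T.domain.zero_mem⟩ : T.domain) = 0 := rfl
    rw [h0, LinearPMap.map_zero]; exact S.domain.zero_mem⟩
  add_mem' := by
    rintro x y ⟨hx, hx'⟩ ⟨hy, hy'⟩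
    refine ⟨T.domain.add_mem hx hy, ?_⟩
    have : (⟨x + y, T.domain.add_mem hx hy⟩ : T.domain) = ⟨x, hx⟩ + ⟨y, hy⟩ := rfl
    rw [this, LinearPMap.map_add]
    exact S.domain.add_mem hx' hy'
  smul_mem' := by
    rintro c x ⟨hx, hx'⟩
    refine ⟨T.domain.smul_mem c hx, ?_⟩
    have : (⟨c • x, T.domain.smul_mem c hx⟩ : T.domain) = c • (⟨x, hx⟩ : T.domain) := rfl
    rw [this, LinearPMap.map_smul]
    exact S.domain.smul_mem c hx'

/-- Composition `S ∘ T` of partial operators, on the maximal domain. -/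
def pmapComp (S T : H →ₗ.[ℂ] H) : H →ₗ.[ℂ] H :=
  S.comp (T.domRestrict (compDomain S T)) (by
    rintro ⟨x, hx⟩
    have hxT : x ∈ T.domain := (Submodule.mem_inf.mp hx).2
    have hxD : x ∈ compDomain S T := (Submodule.mem_inf.mp hx).1
    exact hxD.choose_spec)

/-- Powers of a partial operator: `pmapPow S n = Sⁿ` with its natural domain. -/
def pmapPow (S : H →ₗ.[ℂ] H) : ℕ → (H →ₗ.[ℂ] H)
  | 0 => LinearMap.id.toPMap ⊤
  | n + 1 => pmapComp (pmapPow S n) S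

open Classical in
/-- Total (junk-valued) application of the power `Sⁿ`. -/
def powApp (S : H →ₗ.[ℂ] H) (n : ℕ) (x : H) : H :=
  if h : x ∈ (pmapPow S n).domain then (pmapPow S n) ⟨x, h⟩ else 0

/-- The set of `C^∞`-vectors of `S`. -/
def Dinf (S : H →ₗ.[ℂ] H) : Set H := {x | ∀ n : ℕ, x ∈ (pmapPow S n).domain}

/-- `F` is a core of `S`. -/
def IsCore (S : H →ₗ.[ℂ] H) (F : Submodule ℂ H) : Prop :=
  F ≤ S.domain ∧ (S.graph : Set (H × H)) ⊆ closure ((S.domRestrict F).graph : Set (H × H))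

end Operators
section Operators
universe u
variable {H : Type u} [NormedAddCommGroup H] [InnerProductSpace ℂ H]

/-- A normal (unbounded) operator: closed, densely defined, with `D(N*) = D(N)` and
`‖N* x‖ = ‖N x‖` on the common domain. -/
def IsNormalOp [CompleteSpace H] (N : H →ₗ.[ℂ] H) : Prop :=
  Dense (N.domain : Set H) ∧ N.IsClosed ∧ N.adjoint.domain = N.domain ∧
    ∀ (x : H) (hx : x ∈ N.domain) (hx' : x ∈ N.adjoint.domain),
      ‖N.adjoint ⟨x, hx'⟩‖ = ‖N ⟨x, hx⟩‖

/-- A subnormal operator: densely defined with a normal extension in a possibly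
larger Hilbert space. -/
def IsSubnormal {H : Type u} [NormedAddCommGroup H] [InnerProductSpace ℂ H]
    (S : H →ₗ.[ℂ] H) : Prop :=
  Dense (S.domain : Set H) ∧
  ∃ (K : Type u) (_ : NormedAddCommGroup K) (_ : InnerProductSpace ℂ K) (_ : CompleteSpace K)
    (J : H →ₗᵢ[ℂ] K) (N : K →ₗ.[ℂ] K), IsNormalOp N ∧
      ∀ x : S.domain, ∃ hx : J x ∈ N.domain, N ⟨J x, hx⟩ = J (S x)

/-- A hyponormal operator. -/
def IsHyponormal [CompleteSpace H] (S : H →ₗ.[ℂ] H) : Prop :=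
  Dense (S.domain : Set H) ∧
  ∀ (x : H) (hx : x ∈ S.domain), ∃ hx' : x ∈ S.adjoint.domain,
      ‖S.adjoint ⟨x, hx'⟩‖ ≤ ‖S ⟨x, hx⟩‖

end Operators

/-- A directed tree on the vertex set `V`: a connected directed graph without circuits
in which every non-root vertex has a unique parent. -/
structure DirectedTree (V : Type*) where
  edge : V → V → Prop
  connected : ∀ u v : V, Relation.ReflTransGen (fun a b => edge a b ∨ edge b a) u v
  no_circuits : ∀ v : V, ¬ Relation.TransGen edge v v
  parent_unique : ∀ u v w : V, edge v u → edge w u → v = w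

namespace DirectedTree

variable {V : Type*}

/-- The roots: vertices with no incoming edge. -/
def isRoot (T : DirectedTree V) (v : V) : Prop := ¬ ∃ u : V, T.edge u v

/-- `V°`: the non-root vertices, i.e. vertices having a parent. -/
def nonRoot (T : DirectedTree V) (v : V) : Prop := ∃ u : V, T.edge u v

open Classical in
/-- The parent function (with junk value at roots). -/
def par (T : DirectedTree V) (v : V) : V := if h : ∃ u : V, T.edge u v then h.choose else v

/-- The set of children of a vertex. -/
def chi (T : DirectedTree V) (u : V) : Set V := {v | T.edge u v}

/-- Iterated children `Chi^n(u)`. -/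
def chiN (T : DirectedTree V) : ℕ → V → Set V
  | 0, u => {u}
  | n + 1, u => ⋃ w ∈ T.chiN n u, T.chi w

/-- The descendants of `u`. -/
def des (T : DirectedTree V) (u : V) : Set V := ⋃ n : ℕ, T.chiN n u

/-- `T` is leafless: every vertex has a child. -/
def Leafless (T : DirectedTree V) : Prop := ∀ u : V, ∃ v : V, T.edge u v

/-- The product `λ_{u∣v} = ∏_{j=0}^{n-1} λ_{par^j(v)}` of the weights along the path of
length `n` ending at `v` (for `v ∈ Chi^n(u)` this is the usual `λ_{u∣v}`). -/
def pathProd (T : DirectedTree V) (lam : V → ℂ) (n : ℕ) (v : V) : ℂ :=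
  ∏ j ∈ Finset.range n, lam (T.par^[j] v)

open Classical in
/-- The formal weighted-shift transformation `Λ_T` on families of complex numbers. -/
def lamMap (T : DirectedTree V) (lam : V → ℂ) (f : V → ℂ) : V → ℂ :=
  fun v => if T.nonRoot v then lam v * f (T.par v) else 0

variable (T : DirectedTree V)

theorem lamMap_add (lam : V → ℂ) (f g : V → ℂ) :
    T.lamMap lam (f + g) = T.lamMap lam f + T.lamMap lam g := by
  funext v; simp only [lamMap, Pi.add_apply]; split <;> ring

theorem lamMap_smul (lam : V → ℂ) (c : ℂ) (f : V → ℂ) :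
    T.lamMap lam (c • f) = c • T.lamMap lam f := by
  funext v; simp only [lamMap, Pi.smul_apply, smul_eq_mul]; split <;> ring

theorem lamMap_zero (lam : V → ℂ) : T.lamMap lam (0 : V → ℂ) = 0 := by
  funext v; simp [lamMap]

/-- The domain of the weighted shift `S_λ`. -/
def shiftDomain (lam : V → ℂ) : Submodule ℂ (lp (fun _ : V => ℂ) 2) where
  carrier := {f | Memℓp (T.lamMap lam f) 2}
  zero_mem' := by
    rw [Set.mem_setOf_eq, lp.coeFn_zero, lamMap_zero]
    exact zero_memℓp
  add_mem' := by
    intro f g hf hg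
    rw [Set.mem_setOf_eq, lp.coeFn_add, lamMap_add]
    exact hf.add hg
  smul_mem' := by
    intro c f hf
    rw [Set.mem_setOf_eq, lp.coeFn_smul, lamMap_smul]
    exact hf.const_smul c

/-- The weighted shift `S_λ` on the directed tree `T`, as a partial operator in `ℓ²(V)`. -/
def shift (lam : V → ℂ) : lp (fun _ : V => ℂ) 2 →ₗ.[ℂ] lp (fun _ : V => ℂ) 2 where
  domain := T.shiftDomain lam
  toFun :=
    { toFun := fun f => (⟨T.lamMap lam f, f.2⟩ : lp (fun _ : V => ℂ) 2)
      map_add' := by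
        rintro f g
        apply lp.ext
        rw [lp.coeFn_add]
        show T.lamMap lam
            ((((f : lp (fun _ : V => ℂ) 2) : V → ℂ)) + (((g : lp (fun _ : V => ℂ) 2) : V → ℂ)))
          = T.lamMap lam ((f : lp (fun _ : V => ℂ) 2) : V → ℂ)
            + T.lamMap lam ((g : lp (fun _ : V => ℂ) 2) : V → ℂ)
        exact T.lamMap_add lam _ _
      map_smul' := by
        rintro c f
        apply lp.ext
        rw [lp.coeFn_smul]
        show T.lamMap lam (c • (((f : lp (fun _ : V => ℂ) 2) : V → ℂ)))
          = c • T.lamMap lam ((f : lp (fun _ : V => ℂ) 2) : V → ℂ)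
        exact T.lamMap_smul lam c _ }

end DirectedTree

open Classical in
/-- The basis vector `e_u` of `ℓ²(V)`. -/
def eVec {V : Type*} (u : V) : lp (fun _ : V => ℂ) 2 := lp.single 2 u 1

section MoreDefs
universe u
variable {H : Type u} [NormedAddCommGroup H] [InnerProductSpace ℂ H]

/-- The inner product, linear in the FIRST argument (the paper's convention). -/
def innerPaper (x y : H) : ℂ := inner ℂ y x

/-- The moment sequence `n ↦ ‖Sⁿ f‖²` generated by the vector `f`. -/
def momentSeq (S : H →ₗ.[ℂ] H) (f : H) : ℕ → ℝ := fun n => ‖powApp S n f‖ ^ 2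

/-- `f` is a quasi-analytic vector of `S` : `f ∈ D^∞(S)` and
`∑ₙ ‖Sⁿ f‖^{-1/n} = ∞` (with `1/0 = ∞`). -/
def IsQuasiAnalyticVec (S : H →ₗ.[ℂ] H) (f : H) : Prop :=
  (∀ n : ℕ, f ∈ (pmapPow S n).domain) ∧
  ∑' n : ℕ, ((‖powApp S (n + 1) f‖₊ ^ ((1 : ℝ) / (n + 1)) : ℝ≥0) : ℝ≥0∞)⁻¹ = ∞

end MoreDefs

/-- The consistency condition `μ_u(σ) = ∑_{v ∈ Chi(u)} |λ_v|² ∫_σ (1/s) dμ_v(s) + ε_u δ₀(σ)`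
at the vertex `u` (with the convention `1/0 = ∞`). -/
def consistentAt {V : Type*} (T : DirectedTree V) (lam : V → ℂ) (μ : V → MeasureTheory.Measure ℝ≥0)
    (ε : V → ℝ≥0) (u : V) : Prop :=
  ∀ σ : Set ℝ≥0, MeasurableSet σ →
    μ u σ = (∑' v : {v : V // T.edge u v},
        (‖lam (v : V)‖₊ : ℝ≥0∞) ^ 2 * ∫⁻ s in σ, ((s : ℝ≥0∞))⁻¹ ∂(μ (v : V)))
      + (ε u : ℝ≥0∞) * MeasureTheory.Measure.dirac (0 : ℝ≥0) σ

/-- The sequence `{ϑ, t₀, t₁, t₂, …}` obtained by prepending `ϑ` to `t`. -/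
def shiftedSeq (ϑ : ℝ) (t : ℕ → ℝ) : ℕ → ℝ := fun n => match n with
  | 0 => ϑ
  | n + 1 => t n

/-- A positive definite sequence of real numbers. -/
def IsPosDefSeq (t : ℕ → ℝ) : Prop :=
  ∀ (n : ℕ) (α : ℕ → ℂ),
    0 ≤ (∑ k ∈ Finset.range (n + 1), ∑ l ∈ Finset.range (n + 1),
        (t (k + l) : ℂ) * α k * (starRingEnd ℂ) (α l)).re ∧
    (∑ k ∈ Finset.range (n + 1), ∑ l ∈ Finset.range (n + 1),
        (t (k + l) : ℂ) * α k * (starRingEnd ℂ) (α l)).im = 0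


section AuxPMap
universe u
variable {H : Type u} [NormedAddCommGroup H] [InnerProductSpace ℂ H]

theorem pmap_congr (P : H →ₗ.[ℂ] H) {x y : P.domain} (h : (x : H) = (y : H)) : P x = P y :=
  congrArg (fun z => P z) (Subtype.ext h)

theorem mem_pmapComp_domain {S T : H →ₗ.[ℂ] H} {x : H} :
    x ∈ (pmapComp S T).domain ↔ ∃ hx : x ∈ T.domain, T ⟨x, hx⟩ ∈ S.domain := by
  constructor
  · intro h
    exact (Submodule.mem_inf.mp h).1
  · intro h
    exact Submodule.mem_inf.mpr ⟨h, h.choose⟩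

theorem pmapComp_apply {S T : H →ₗ.[ℂ] H} {x : H} (hx : x ∈ (pmapComp S T).domain)
    (hxT : x ∈ T.domain) (hS : T ⟨x, hxT⟩ ∈ S.domain) :
    pmapComp S T ⟨x, hx⟩ = S ⟨T ⟨x, hxT⟩, hS⟩ := by
  have h1 : (T.domRestrict (compDomain S T)) ⟨x, hx⟩ = T ⟨x, hxT⟩ :=
    LinearPMap.domRestrict_apply rfl
  have h2 : (T.domRestrict (compDomain S T)) ⟨x, hx⟩ ∈ S.domain := h1.symm ▸ hS
  have h3 : pmapComp S T ⟨x, hx⟩ = S ⟨(T.domRestrict (compDomain S T)) ⟨x, hx⟩, h2⟩ := rfl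
  rw [h3]
  exact pmap_congr S h1

theorem pmapPow_succ (S : H →ₗ.[ℂ] H) (n : ℕ) :
    pmapPow S (n + 1) = pmapComp (pmapPow S n) S := rfl

theorem mem_pmapPow_zero (S : H →ₗ.[ℂ] H) (x : H) : x ∈ (pmapPow S 0).domain :=
  Submodule.mem_top

theorem mem_pmapPow_succ {S : H →ₗ.[ℂ] H} {n : ℕ} {x : H} :
    x ∈ (pmapPow S (n + 1)).domain ↔ ∃ hx : x ∈ S.domain, S ⟨x, hx⟩ ∈ (pmapPow S n).domain :=
  mem_pmapComp_domain

theorem pmapPow_succ_apply {S : H →ₗ.[ℂ] H} {n : ℕ} {x : H}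
    (hx : x ∈ (pmapPow S (n + 1)).domain) (hxS : x ∈ S.domain)
    (hn : S ⟨x, hxS⟩ ∈ (pmapPow S n).domain) :
    pmapPow S (n + 1) ⟨x, hx⟩ = pmapPow S n ⟨S ⟨x, hxS⟩, hn⟩ :=
  pmapComp_apply hx hxS hn

theorem pmapPow_zero_apply (S : H →ₗ.[ℂ] H) (x : H) (hx : x ∈ (pmapPow S 0).domain) :
    pmapPow S 0 ⟨x, hx⟩ = x := rfl

end AuxPMap

namespace DirectedTree
variable {V : Type*} (T : DirectedTree V)

theorem par_eq {u v : V} (h : T.edge u v) : T.par v = u := by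
  have hex : ∃ w, T.edge w v := ⟨u, h⟩
  rw [DirectedTree.par, dif_pos hex]
  exact T.parent_unique v _ _ hex.choose_spec h

theorem mem_chiN_succ {n : ℕ} {u v : V} :
    v ∈ T.chiN (n + 1) u ↔ ∃ w ∈ T.chiN n u, T.edge w v := by
  simp [DirectedTree.chiN, DirectedTree.chi]

theorem parIter_of_mem_chiN : ∀ (n : ℕ) {u v : V}, v ∈ T.chiN n u → T.par^[n] v = u := by
  intro n
  induction n with
  | zero => intro u v hv; exact hv
  | succ n ih =>
    intro u v hv
    obtain ⟨w, hw, hwv⟩ := T.mem_chiN_succ.mp hv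
    rw [Function.iterate_succ_apply, T.par_eq hwv]
    exact ih hw

theorem mem_chiN_succ' : ∀ (n : ℕ) {u v : V},
    v ∈ T.chiN (n + 1) u ↔ ∃ w, T.edge u w ∧ v ∈ T.chiN n w := by
  intro n
  induction n with
  | zero =>
    intro u v
    rw [T.mem_chiN_succ]
    constructor
    · rintro ⟨w, hw, hwv⟩
      exact ⟨v, by rwa [show w = u from hw] at hwv, rfl⟩
    · rintro ⟨w, huw, hvw⟩
      exact ⟨u, rfl, by rwa [show v = w from hvw]⟩
  | succ n ih =>
    intro u v
    rw [T.mem_chiN_succ]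
    constructor
    · rintro ⟨w, hw, hwv⟩
      obtain ⟨x, hux, hwx⟩ := (ih).mp hw
      exact ⟨x, hux, T.mem_chiN_succ.mpr ⟨w, hwx, hwv⟩⟩
    · rintro ⟨x, hux, hvx⟩
      obtain ⟨w, hwx, hwv⟩ := T.mem_chiN_succ.mp hvx
      exact ⟨w, ih.mpr ⟨x, hux, hwx⟩, hwv⟩

theorem pathProd_zero (lam : V → ℂ) (v : V) : T.pathProd lam 0 v = 1 := by
  simp [DirectedTree.pathProd]

theorem pathProd_succ_last (lam : V → ℂ) (n : ℕ) (v : V) :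
    T.pathProd lam (n + 1) v = T.pathProd lam n v * lam (T.par^[n] v) :=
  Finset.prod_range_succ _ _

theorem pathProd_succ_head (lam : V → ℂ) (n : ℕ) (v : V) :
    T.pathProd lam (n + 1) v = T.pathProd lam n (T.par v) * lam v := by
  rw [DirectedTree.pathProd, Finset.prod_range_succ']
  simp only [Function.iterate_succ_apply, Function.iterate_zero_apply]
  rfl

theorem chiN_empty_mono {u : V} {n : ℕ} (h : T.chiN n u = ∅) :
    ∀ m, n ≤ m → T.chiN m u = ∅ := by
  intro m hm
  induction m with
  | zero => rw [Nat.le_zero.mp hm] at h; exact h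
  | succ m ih =>
    rcases Nat.lt_or_ge n (m + 1) with hlt | hge
    · have hm' : T.chiN m u = ∅ := ih (Nat.lt_succ_iff.mp hlt)
      ext v
      simp only [Set.mem_empty_iff_false, iff_false]
      intro hv
      obtain ⟨w, hw, _⟩ := T.mem_chiN_succ.mp hv
      rw [hm'] at hw
      exact hw
    · rw [Nat.le_antisymm hm hge] at h; exact h

theorem chiN_subset_of_mem {u v : V} {m : ℕ} (hv : v ∈ T.chiN m u) :
    ∀ k, T.chiN k v ⊆ T.chiN (m + k) u := by
  intro k
  induction k with
  | zero => intro x hx; rw [show x = v from hx]; exact hv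
  | succ k ih =>
    intro x hx
    obtain ⟨w, hw, hwx⟩ := T.mem_chiN_succ.mp hx
    exact T.mem_chiN_succ.mpr ⟨w, ih hw, hwx⟩

end DirectedTree

namespace Stmt13Aux
open DirectedTree
variable {V : Type*} (T : DirectedTree V) (lam : V → ℂ)

open Classical in
/-- The summand `|λ_{u|v}|²` as a function on all of `V`, zero off `Chi^n(u)`. -/
def G (n : ℕ) (u v : V) : ℝ≥0∞ :=
  if v ∈ T.chiN n u then (‖T.pathProd lam n v‖₊ : ℝ≥0∞) ^ 2 else 0

/-- `PathSum n u = ∑_{v ∈ Chi^n(u)} |λ_{u|v}|²`. -/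
def PathSum (n : ℕ) (u : V) : ℝ≥0∞ := ∑' v : V, G T lam n u v

theorem tsum_subtype_eq_PathSum (n : ℕ) (u : V) :
    (∑' v : (T.chiN n u), (‖T.pathProd lam n (v : V)‖₊ : ℝ≥0∞) ^ 2) = PathSum T lam n u := by
  rw [PathSum]
  refine (tsum_subtype (T.chiN n u) (fun v => (‖T.pathProd lam n v‖₊ : ℝ≥0∞) ^ 2)).trans ?_
  refine tsum_congr fun v => ?_
  by_cases h : v ∈ T.chiN n u <;> simp [G, h]

theorem PathSum_zero (u : V) : PathSum T lam 0 u = 1 := by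
  rw [PathSum, tsum_eq_single u]
  · have hu : u ∈ T.chiN 0 u := rfl
    simp [G, hu, T.pathProd_zero]
  · intro v hv
    have : v ∉ T.chiN 0 u := fun h => hv (show v = u from h)
    simp [G, this]

theorem G_succ (n : ℕ) (u v : V) :
    G T lam (n + 1) u v
      = ∑' w : {w : V // T.edge u w}, (‖lam (w : V)‖₊ : ℝ≥0∞) ^ 2 * G T lam n (w : V) v := by
  by_cases h : v ∈ T.chiN (n + 1) u
  · obtain ⟨w₀, hw₀, hv₀⟩ := (T.mem_chiN_succ' n).mp h
    rw [tsum_eq_single (⟨w₀, hw₀⟩ : {w : V // T.edge u w})]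
    · have hpar : T.par^[n] v = w₀ := T.parIter_of_mem_chiN n hv₀
      have hG : G T lam n w₀ v = (‖T.pathProd lam n v‖₊ : ℝ≥0∞) ^ 2 := by simp [G, hv₀]
      rw [hG, G, if_pos h, T.pathProd_succ_last, hpar]
      push_cast [nnnorm_mul]
      ring
    · rintro ⟨w, hw⟩ hne
      have : v ∉ T.chiN n w := by
        intro hv
        have hww : w = w₀ := by
          rw [← T.parIter_of_mem_chiN n hv]; exact T.parIter_of_mem_chiN n hv₀
        exact hne (Subtype.ext hww)
      simp [G, this]
  · rw [G, if_neg h]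
    symm
    rw [ENNReal.tsum_eq_zero]
    rintro ⟨w, hw⟩
    have : v ∉ T.chiN n w := fun hv => h ((T.mem_chiN_succ' n).mpr ⟨w, hw, hv⟩)
    simp [G, this]

theorem PathSum_succ (n : ℕ) (u : V) :
    PathSum T lam (n + 1) u
      = ∑' w : {w : V // T.edge u w}, (‖lam (w : V)‖₊ : ℝ≥0∞) ^ 2 * PathSum T lam n (w : V) := by
  rw [PathSum]
  rw [tsum_congr (G_succ T lam n u), ENNReal.tsum_comm]
  exact tsum_congr fun w => ENNReal.tsum_mul_left

section Measures
open MeasureTheory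
variable (μ : V → Measure ℝ≥0) (ε : V → ℝ≥0)

/-- The `n`-th moment of `μ u`. -/
def M (u : V) (n : ℕ) : ℝ≥0∞ := ∫⁻ s, ((s : ℝ≥0∞)) ^ n ∂(μ u)

theorem measure_eq (hcons : ∀ u : V, consistentAt T lam μ ε u) (u : V) :
    μ u = Measure.sum (fun w : {w : V // T.edge u w} =>
        ((‖lam (w : V)‖₊ : ℝ≥0∞) ^ 2) • ((μ (w : V)).withDensity fun s => ((s : ℝ≥0∞))⁻¹))
      + (ε u : ℝ≥0∞) • Measure.dirac (0 : ℝ≥0) := by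
  ext σ hσ
  rw [hcons u σ hσ, Measure.add_apply, Measure.sum_apply _ hσ, Measure.smul_apply,
    smul_eq_mul]
  congr 1
  refine tsum_congr fun w => ?_
  rw [Measure.smul_apply, smul_eq_mul, withDensity_apply _ hσ]

theorem lintegral_eq (hcons : ∀ u : V, consistentAt T lam μ ε u) (u : V)
    {f : ℝ≥0 → ℝ≥0∞} (hf : Measurable f) :
    ∫⁻ s, f s ∂(μ u)
      = (∑' w : {w : V // T.edge u w},
          (‖lam (w : V)‖₊ : ℝ≥0∞) ^ 2 * ∫⁻ s, ((s : ℝ≥0∞))⁻¹ * f s ∂(μ (w : V)))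
        + (ε u : ℝ≥0∞) * f 0 := by
  conv_lhs => rw [measure_eq T lam μ ε hcons u]
  rw [lintegral_add_measure, lintegral_sum_measure, lintegral_smul_measure,
    lintegral_dirac]
  congr 1
  refine tsum_congr fun w => ?_
  rw [lintegral_smul_measure,
    lintegral_withDensity_eq_lintegral_mul _ (f := fun s : ℝ≥0 => ((s : ℝ≥0∞))⁻¹)
      measurable_coe_nnreal_ennreal.inv hf]
  rfl

theorem meas_zero (hprob : ∀ v : V, IsProbabilityMeasure (μ v))
    (hcons : ∀ u : V, consistentAt T lam μ ε u) {u w : V} (h : T.edge u w)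
    (hl : lam w ≠ 0) : μ w {0} = 0 := by
  by_contra h0
  have hc := hcons u {0} (measurableSet_singleton 0)
  have hterm : (‖lam w‖₊ : ℝ≥0∞) ^ 2 * ∫⁻ s in {0}, ((s : ℝ≥0∞))⁻¹ ∂(μ w) = ∞ := by
    rw [lintegral_singleton]
    have : (((0 : ℝ≥0) : ℝ≥0∞))⁻¹ = ∞ := by simp
    rw [this, ENNReal.top_mul h0, ENNReal.mul_top]
    simp [pow_eq_zero_iff, hl]
  have hle : (∞ : ℝ≥0∞) ≤ μ u {0} := by
    rw [hc]
    refine le_trans ?_ le_self_add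
    rw [← hterm]
    exact ENNReal.le_tsum (⟨w, h⟩ : {w : V // T.edge u w})
  have : μ u {0} ≤ 1 := prob_le_one
  simp only [top_le_iff] at hle
  rw [hle] at this
  exact (by simp : ¬ ((⊤ : ℝ≥0∞) ≤ 1)) this

theorem term_eq (hprob : ∀ v : V, IsProbabilityMeasure (μ v))
    (hcons : ∀ u : V, consistentAt T lam μ ε u) {u w : V} (h : T.edge u w) (n : ℕ) :
    (‖lam w‖₊ : ℝ≥0∞) ^ 2 * ∫⁻ s, ((s : ℝ≥0∞))⁻¹ * ((s : ℝ≥0∞)) ^ (n + 1) ∂(μ w)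
      = (‖lam w‖₊ : ℝ≥0∞) ^ 2 * M μ w n := by
  by_cases hl : lam w = 0
  · simp [hl]
  have hz : μ w {0} = 0 := meas_zero T lam μ ε hprob hcons h hl
  congr 1
  rw [M]
  refine lintegral_congr_ae ?_
  have hae : ∀ᵐ s ∂(μ w), s ≠ 0 := by
    rw [ae_iff]
    simpa using hz
  filter_upwards [hae] with s hs
  have hs' : ((s : ℝ≥0∞)) ≠ 0 := by simpa using hs
  have hre : ((s : ℝ≥0∞))⁻¹ * ((s : ℝ≥0∞)) ^ (n + 1)
      = ((s : ℝ≥0∞) * ((s : ℝ≥0∞))⁻¹) * ((s : ℝ≥0∞)) ^ n := by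
    rw [pow_succ]; ring
  rw [hre, ENNReal.mul_inv_cancel hs' (by simp), one_mul]

theorem M_zero (hprob : ∀ v : V, IsProbabilityMeasure (μ v)) (u : V) : M μ u 0 = 1 := by
  simp [M]

theorem M_succ (hprob : ∀ v : V, IsProbabilityMeasure (μ v))
    (hcons : ∀ u : V, consistentAt T lam μ ε u) (u : V) (n : ℕ) :
    M μ u (n + 1)
      = ∑' w : {w : V // T.edge u w}, (‖lam (w : V)‖₊ : ℝ≥0∞) ^ 2 * M μ (w : V) n := by
  rw [M, lintegral_eq T lam μ ε hcons u (measurable_coe_nnreal_ennreal.pow_const (n + 1))]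
  simp only [ENNReal.coe_zero, zero_pow (Nat.succ_ne_zero n), mul_zero, add_zero]
  exact tsum_congr fun w => term_eq T lam μ ε hprob hcons w.2 n

theorem M_eq_PathSum (hprob : ∀ v : V, IsProbabilityMeasure (μ v))
    (hcons : ∀ u : V, consistentAt T lam μ ε u) (n : ℕ) (u : V) :
    M μ u n = PathSum T lam n u := by
  induction n generalizing u with
  | zero => rw [M_zero μ hprob, PathSum_zero]
  | succ n ih =>
    rw [M_succ T lam μ ε hprob hcons, PathSum_succ]
    exact tsum_congr fun w => by rw [ih]

end Measures
end Stmt13Aux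

namespace Stmt13Aux
open DirectedTree MeasureTheory

theorem eq_dirac_zero_of (ν : Measure ℝ≥0) (hp : IsProbabilityMeasure ν)
    (h : ν {(0 : ℝ≥0)}ᶜ = 0) : ν = Measure.dirac 0 := by
  ext σ hσ
  rw [Measure.dirac_apply' _ hσ]
  have hsplit : ν σ = ν (σ ∩ {0}) := by
    refine le_antisymm ?_ (measure_mono Set.inter_subset_left)
    calc ν σ ≤ ν ((σ ∩ {0}) ∪ {(0:ℝ≥0)}ᶜ) := by
          refine measure_mono fun s hs => ?_
          by_cases h0 : s = 0
          · exact Or.inl ⟨hs, h0⟩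
          · exact Or.inr h0
      _ ≤ ν (σ ∩ {0}) + ν {(0:ℝ≥0)}ᶜ := measure_union_le _ _
      _ = ν (σ ∩ {0}) := by rw [h, add_zero]
  by_cases h0 : (0 : ℝ≥0) ∈ σ
  · have : σ ∩ {0} = {0} := Set.inter_eq_right.mpr (by simpa using h0)
    rw [hsplit, this, Set.indicator_of_mem h0]
    have htot : ν {(0:ℝ≥0)} + ν {(0:ℝ≥0)}ᶜ = 1 := by
      rw [← measure_union (disjoint_compl_right) (measurableSet_singleton 0).compl,
        Set.union_compl_self, measure_univ]
    rw [h, add_zero] at htot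
    rw [htot]
    rfl
  · have : σ ∩ {0} = ∅ := by
      ext s; simp only [Set.mem_inter_iff, Set.mem_singleton_iff, Set.mem_empty_iff_false,
        iff_false, not_and]
      rintro hs rfl; exact h0 hs
    rw [hsplit, this, measure_empty, Set.indicator_of_notMem h0]

variable {V : Type*} (T : DirectedTree V) (lam : V → ℂ)

open Classical in
/-- The function representing `S_λ^n e_u`. -/
def Fr (u : V) (n : ℕ) : V → ℂ := fun v => if v ∈ T.chiN n u then T.pathProd lam n v else 0

theorem lamMap_Fr (u : V) (n : ℕ) : T.lamMap lam (Fr T lam u n) = Fr T lam u (n + 1) := by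
  funext v
  simp only [DirectedTree.lamMap, Fr]
  by_cases hnr : T.nonRoot v
  · rw [if_pos hnr]
    have hedge : T.edge (T.par v) v := by
      have hex : ∃ w, T.edge w v := hnr
      rw [DirectedTree.par, dif_pos hex]
      exact hex.choose_spec
    by_cases hv : v ∈ T.chiN (n + 1) u
    · obtain ⟨w, hw, hwv⟩ := T.mem_chiN_succ.mp hv
      have hp : T.par v = w := T.par_eq hwv
      rw [hp, if_pos hw, if_pos hv, T.pathProd_succ_head, hp]
      ring
    · have hpar : T.par v ∉ T.chiN n u := fun hw =>
        hv (T.mem_chiN_succ.mpr ⟨T.par v, hw, hedge⟩)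
      rw [if_neg hv, if_neg hpar, mul_zero]
  · rw [if_neg hnr]
    have hv : v ∉ T.chiN (n + 1) u := by
      intro hv
      obtain ⟨w, _, hwv⟩ := T.mem_chiN_succ.mp hv
      exact hnr ⟨w, hwv⟩
    rw [if_neg hv]

theorem G_eq_Fr (u : V) (n : ℕ) (v : V) :
    ((‖Fr T lam u n v‖₊ : ℝ≥0∞)) ^ 2 = G T lam n u v := by
  simp only [Fr, G]
  by_cases h : v ∈ T.chiN n u <;> simp [h]

theorem memlp_Fr_iff (u : V) (n : ℕ) :
    Memℓp (Fr T lam u n) 2 ↔ PathSum T lam n u ≠ ∞ := by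
  rw [memℓp_gen_iff (by norm_num : 0 < (2 : ℝ≥0∞).toReal)]
  have h1 : (fun v => ‖Fr T lam u n v‖ ^ (2 : ℝ≥0∞).toReal)
      = fun v => (((‖Fr T lam u n v‖₊ ^ 2 : ℝ≥0) : ℝ)) := by
    funext v
    rw [show ((2 : ℝ≥0∞).toReal) = ((2 : ℕ) : ℝ) by norm_num, Real.rpow_natCast]
    push_cast
    rfl
  rw [h1, NNReal.summable_coe, ← ENNReal.tsum_coe_ne_top_iff_summable]
  have h2 : ∑' v, ((‖Fr T lam u n v‖₊ ^ 2 : ℝ≥0) : ℝ≥0∞) = PathSum T lam n u := by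
    refine tsum_congr fun v => ?_
    rw [ENNReal.coe_pow]
    exact G_eq_Fr T lam u n v
  rw [h2]

theorem nnnorm_sq_eq {V : Type*} (f : lp (fun _ : V => ℂ) 2) :
    ((‖f‖₊ : ℝ≥0∞)) ^ 2 = ∑' v, ((‖(f : ∀ _ : V, ℂ) v‖₊ : ℝ≥0∞)) ^ 2 := by
  have hsum : Summable (fun v => ‖(f : ∀ _ : V, ℂ) v‖ ^ (2 : ℝ≥0∞).toReal) :=
    (memℓp_gen_iff (by norm_num : 0 < (2 : ℝ≥0∞).toReal)).mp (lp.memℓp f)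
  have hnorm := lp.norm_rpow_eq_tsum (by norm_num : 0 < (2 : ℝ≥0∞).toReal) f
  have h0 : ((‖f‖₊ : ℝ≥0∞)) ^ 2 = ENNReal.ofReal (‖f‖ ^ (2 : ℝ≥0∞).toReal) := by
    rw [show ((2 : ℝ≥0∞).toReal) = ((2 : ℕ) : ℝ) by norm_num, Real.rpow_natCast,
      ENNReal.ofReal_pow (norm_nonneg f), ofReal_norm, enorm_eq_nnnorm]
  rw [h0, hnorm,
    ENNReal.ofReal_tsum_of_nonneg (fun v => Real.rpow_nonneg (norm_nonneg _) _) hsum]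
  refine tsum_congr fun v => ?_
  rw [show ((2 : ℝ≥0∞).toReal) = ((2 : ℕ) : ℝ) by norm_num, Real.rpow_natCast,
    ENNReal.ofReal_pow (norm_nonneg _), ofReal_norm, enorm_eq_nnnorm]

theorem nnnorm_Fr_elt (u : V) (n : ℕ) (hF : Memℓp (Fr T lam u n) 2) :
    ((‖(⟨Fr T lam u n, hF⟩ : lp (fun _ : V => ℂ) 2)‖₊ : ℝ≥0∞)) ^ 2 = PathSum T lam n u := by
  rw [nnnorm_sq_eq]
  exact tsum_congr fun v => G_eq_Fr T lam u n v

theorem mem_shift_domain {f : lp (fun _ : V => ℂ) 2} :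
    f ∈ (T.shift lam).domain ↔ Memℓp (T.lamMap lam (f : ∀ _ : V, ℂ)) 2 := Iff.rfl

theorem shift_apply (f : lp (fun _ : V => ℂ) 2) (hf : f ∈ (T.shift lam).domain) :
    (((T.shift lam) ⟨f, hf⟩ : lp (fun _ : V => ℂ) 2) : ∀ _ : V, ℂ)
      = T.lamMap lam (f : ∀ _ : V, ℂ) := rfl

open Classical in
theorem eVec_eq_Fr (u : V) : ((eVec u : lp (fun _ : V => ℂ) 2) : ∀ _ : V, ℂ) = Fr T lam u 0 := by
  funext v
  simp only [Fr, eVec]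
  by_cases h : v = u
  · subst h
    rw [if_pos (show v ∈ T.chiN 0 v from rfl), T.pathProd_zero, lp.single_apply_self]
  · have hm : v ∉ T.chiN 0 u := fun hm => h (show v = u from hm)
    rw [if_neg hm, lp.single_apply_ne 2 u 1 h]

theorem memlp_Fr_zero (u : V) : Memℓp (Fr T lam u 0) 2 := by
  rw [← eVec_eq_Fr T lam u]
  exact lp.memℓp (eVec u)

theorem pow_key (u : V) : ∀ (n m : ℕ) (hm : Memℓp (Fr T lam u m) 2),
    ((⟨Fr T lam u m, hm⟩ : lp (fun _ : V => ℂ) 2) ∈ (pmapPow (T.shift lam) n).domain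
      ↔ ∀ k, k ≤ n → Memℓp (Fr T lam u (m + k)) 2)
    ∧ ∀ (h : (⟨Fr T lam u m, hm⟩ : lp (fun _ : V => ℂ) 2) ∈ (pmapPow (T.shift lam) n).domain)
        (h' : Memℓp (Fr T lam u (m + n)) 2),
        pmapPow (T.shift lam) n ⟨⟨Fr T lam u m, hm⟩, h⟩
          = (⟨Fr T lam u (m + n), h'⟩ : lp (fun _ : V => ℂ) 2) := by
  intro n
  induction n with
  | zero =>
    intro m hm
    refine ⟨⟨fun _ k hk => ?_, fun _ => Submodule.mem_top⟩, fun h h' => ?_⟩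
    · rw [Nat.le_zero.mp hk]
      exact hm
    · rw [pmapPow_zero_apply]
      rfl
  | succ n ih =>
    intro m hm
    have hlam : T.lamMap lam ((⟨Fr T lam u m, hm⟩ : lp (fun _ : V => ℂ) 2) : ∀ _ : V, ℂ)
        = Fr T lam u (m + 1) := lamMap_Fr T lam u m
    constructor
    · constructor
      · intro h k hk
        obtain ⟨hxS, hSx⟩ := mem_pmapPow_succ.mp h
        have hm1 : Memℓp (Fr T lam u (m + 1)) 2 := by
          rw [← hlam]; exact (mem_shift_domain T lam).mp hxS
        have hval : (T.shift lam) ⟨⟨Fr T lam u m, hm⟩, hxS⟩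
            = (⟨Fr T lam u (m + 1), hm1⟩ : lp (fun _ : V => ℂ) 2) :=
          lp.ext (by rw [shift_apply, hlam])
        have hdom : (⟨Fr T lam u (m + 1), hm1⟩ : lp (fun _ : V => ℂ) 2)
            ∈ (pmapPow (T.shift lam) n).domain := hval ▸ hSx
        cases k with
        | zero => exact hm
        | succ k' =>
          have hk' : k' ≤ n := by omega
          have hmem := (ih (m + 1) hm1).1.mp hdom k' hk'
          have e : m + 1 + k' = m + (k' + 1) := by omega
          rwa [e] at hmem
      · intro hall
        have hm1 : Memℓp (Fr T lam u (m + 1)) 2 := hall 1 (by omega)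
        have hxS : (⟨Fr T lam u m, hm⟩ : lp (fun _ : V => ℂ) 2) ∈ (T.shift lam).domain :=
          (mem_shift_domain T lam).mpr (by rw [hlam]; exact hm1)
        have hval : (T.shift lam) ⟨⟨Fr T lam u m, hm⟩, hxS⟩
            = (⟨Fr T lam u (m + 1), hm1⟩ : lp (fun _ : V => ℂ) 2) :=
          lp.ext (by rw [shift_apply, hlam])
        refine mem_pmapPow_succ.mpr ⟨hxS, ?_⟩
        rw [hval]
        refine (ih (m + 1) hm1).1.mpr fun k hk => ?_
        have e : m + 1 + k = m + (k + 1) := by omega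
        rw [e]
        exact hall (k + 1) (by omega)
    · intro h h'
      obtain ⟨hxS, hSx⟩ := mem_pmapPow_succ.mp h
      have hm1 : Memℓp (Fr T lam u (m + 1)) 2 := by
        rw [← hlam]; exact (mem_shift_domain T lam).mp hxS
      have hval : (T.shift lam) ⟨⟨Fr T lam u m, hm⟩, hxS⟩
          = (⟨Fr T lam u (m + 1), hm1⟩ : lp (fun _ : V => ℂ) 2) :=
        lp.ext (by rw [shift_apply, hlam])
      have hdom : (⟨Fr T lam u (m + 1), hm1⟩ : lp (fun _ : V => ℂ) 2)
          ∈ (pmapPow (T.shift lam) n).domain := hval ▸ hSx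
      have h'' : Memℓp (Fr T lam u (m + 1 + n)) 2 := by
        have e : m + 1 + n = m + (n + 1) := by omega
        rw [e]; exact h'
      rw [pmapPow_succ_apply h hxS hSx]
      have hcongr : pmapPow (T.shift lam) n ⟨(T.shift lam) ⟨⟨Fr T lam u m, hm⟩, hxS⟩, hSx⟩
          = pmapPow (T.shift lam) n ⟨⟨Fr T lam u (m + 1), hm1⟩, hdom⟩ :=
        pmap_congr _ hval
      rw [hcongr, (ih (m + 1) hm1).2 hdom h'']
      exact lp.ext (show Fr T lam u (m + 1 + n) = Fr T lam u (m + (n + 1)) by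
        rw [show m + 1 + n = m + (n + 1) by omega])

end Stmt13Aux


/-- moments of the measures of a consistent system and membership of the
basis vectors in `D^∞(S_λ)`. -/
theorem stmt13 {V : Type*} (T : DirectedTree V) (lam : V → ℂ)
    (ε : V → ℝ≥0) (μ : V → Measure ℝ≥0)
    (hprob : ∀ v : V, IsProbabilityMeasure (μ v))
    (hcons : ∀ u : V, consistentAt T lam μ ε u) :
    (∀ (u : V) (n : ℕ), 1 ≤ n →
      (∫⁻ s, ((s : ℝ≥0∞)) ^ n ∂(μ u))
        = ∑' v : (T.chiN n u), (‖T.pathProd lam n (v : V)‖₊ : ℝ≥0∞) ^ 2)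
    ∧ (∀ (u : V) (n : ℕ), 1 ≤ n → T.chiN n u = ∅ →
        ∀ v ∈ T.des u, μ v = Measure.dirac (0 : ℝ≥0))
    ∧ ((Submodule.span ℂ (Set.range (eVec (V := V))) : Set (lp (fun _ : V => ℂ) 2)) ⊆ Dinf (T.shift lam) ↔
        ∀ (n : ℕ) (u : V), (∫⁻ s, ((s : ℝ≥0∞)) ^ n ∂(μ u)) ≠ ⊤)
    ∧ ((Submodule.span ℂ (Set.range (eVec (V := V))) : Set (lp (fun _ : V => ℂ) 2)) ⊆ Dinf (T.shift lam) →
        ∀ (u : V) (n : ℕ),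
          ((‖powApp (T.shift lam) n (eVec u)‖₊ : ℝ≥0∞)) ^ 2
            = ∫⁻ s, ((s : ℝ≥0∞)) ^ n ∂(μ u)) := by
  classical
  have hM := Stmt13Aux.M_eq_PathSum T lam μ ε hprob hcons
  have hFr0 : ∀ u : V, Memℓp (Stmt13Aux.Fr T lam u 0) 2 := Stmt13Aux.memlp_Fr_zero T lam
  have heVec : ∀ u : V, eVec u = (⟨Stmt13Aux.Fr T lam u 0, hFr0 u⟩ : lp (fun _ : V => ℂ) 2) :=
    fun u => lp.ext (Stmt13Aux.eVec_eq_Fr T lam u)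
  have hmemiff : ∀ (u : V) (n : ℕ),
      (eVec u ∈ (pmapPow (T.shift lam) n).domain
        ↔ ∀ k, k ≤ n → Memℓp (Stmt13Aux.Fr T lam u k) 2) := by
    intro u n
    rw [heVec u]
    have hkey := (Stmt13Aux.pow_key T lam u n 0 (hFr0 u)).1
    constructor
    · intro h k hk
      have h2 := hkey.mp h k hk
      rwa [zero_add] at h2
    · intro h
      exact hkey.mpr fun k hk => by rw [zero_add]; exact h k hk
  have hmem_all_iff : (∀ (u : V) (n : ℕ), eVec u ∈ (pmapPow (T.shift lam) n).domain)
      ↔ ∀ (n : ℕ) (u : V), (∫⁻ s, ((s : ℝ≥0∞)) ^ n ∂(μ u)) ≠ ⊤ := by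
    constructor
    · intro h n u
      have h1 : Memℓp (Stmt13Aux.Fr T lam u n) 2 := (hmemiff u n).mp (h u n) n le_rfl
      have h2 : Stmt13Aux.PathSum T lam n u ≠ ∞ := (Stmt13Aux.memlp_Fr_iff T lam u n).mp h1
      show Stmt13Aux.M μ u n ≠ ⊤
      rw [hM n u]
      exact h2
    · intro h u n
      refine (hmemiff u n).mpr fun k _ => ?_
      refine (Stmt13Aux.memlp_Fr_iff T lam u k).mpr ?_
      rw [← hM k u]
      exact h k u
  refine ⟨?_, ?_, ?_, ?_⟩
  · intro u n _
    exact (hM n u).trans (Stmt13Aux.tsum_subtype_eq_PathSum T lam n u).symm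
  · intro u n hn hempty v hv
    obtain ⟨m, hm⟩ : ∃ m, v ∈ T.chiN m u := Set.mem_iUnion.mp hv
    have hempty' : T.chiN n v = ∅ := by
      have h1 : T.chiN n v ⊆ T.chiN (m + n) u := T.chiN_subset_of_mem hm n
      have h2 : T.chiN (m + n) u = ∅ := T.chiN_empty_mono hempty (m + n) (by omega)
      exact Set.subset_empty_iff.mp (h2 ▸ h1)
    have hPS : Stmt13Aux.PathSum T lam n v = 0 := by
      rw [Stmt13Aux.PathSum, ENNReal.tsum_eq_zero]
      intro w
      have hw : w ∉ T.chiN n v := by rw [hempty']; exact Set.notMem_empty w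
      simp [Stmt13Aux.G, hw]
    have hMv : (∫⁻ s, ((s : ℝ≥0∞)) ^ n ∂(μ v)) = 0 := (hM n v).trans hPS
    have hae : (fun s : ℝ≥0 => ((s : ℝ≥0∞)) ^ n) =ᵐ[μ v] 0 :=
      (lintegral_eq_zero_iff (measurable_coe_nnreal_ennreal.pow_const n)).mp hMv
    have hcompl : μ v {(0 : ℝ≥0)}ᶜ = 0 := by
      have h0 : μ v {s : ℝ≥0 | ¬ ((s : ℝ≥0∞)) ^ n = 0} = 0 := by
        have h1 := hae
        rw [Filter.EventuallyEq, ae_iff] at h1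
        simpa using h1
      refine measure_mono_null (fun s hs => ?_) h0
      simp only [Set.mem_setOf_eq]
      intro hzero
      have hs0 : (s : ℝ≥0∞) = 0 := pow_eq_zero_iff (by omega) |>.mp hzero
      exact hs (by simpa using hs0)
    exact Stmt13Aux.eq_dirac_zero_of (μ v) (hprob v) hcompl
  · constructor
    · intro hsub n u
      refine hmem_all_iff.mp (fun u n => ?_) n u
      exact (hsub (Submodule.subset_span (Set.mem_range_self u))) n
    · intro hfin x hx n
      have hle : Submodule.span ℂ (Set.range (eVec (V := V))) ≤ (pmapPow (T.shift lam) n).domain := by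
        refine Submodule.span_le.mpr ?_
        rintro _ ⟨u, rfl⟩
        exact hmem_all_iff.mpr hfin u n
      exact hle hx
  · intro hsub u n
    have hmem : ∀ k : ℕ, eVec u ∈ (pmapPow (T.shift lam) k).domain :=
      fun k => (hsub (Submodule.subset_span (Set.mem_range_self u))) k
    have hml : ∀ k : ℕ, Memℓp (Stmt13Aux.Fr T lam u k) 2 :=
      fun k => (hmemiff u k).mp (hmem k) k le_rfl
    have hval : pmapPow (T.shift lam) n ⟨eVec u, hmem n⟩
        = (⟨Stmt13Aux.Fr T lam u n, hml n⟩ : lp (fun _ : V => ℂ) 2) := by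
      have hd : (⟨Stmt13Aux.Fr T lam u 0, hFr0 u⟩ : lp (fun _ : V => ℂ) 2)
          ∈ (pmapPow (T.shift lam) n).domain := by
        rw [← heVec u]; exact hmem n
      have h1 : pmapPow (T.shift lam) n ⟨eVec u, hmem n⟩
          = pmapPow (T.shift lam) n ⟨⟨Stmt13Aux.Fr T lam u 0, hFr0 u⟩, hd⟩ :=
        pmap_congr _ (heVec u)
      have hmn : Memℓp (Stmt13Aux.Fr T lam u (0 + n)) 2 := by rw [zero_add]; exact hml n
      have h2 := (Stmt13Aux.pow_key T lam u n 0 (hFr0 u)).2 hd hmn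
      rw [h1, h2]
      exact lp.ext (show Stmt13Aux.Fr T lam u (0 + n) = Stmt13Aux.Fr T lam u n by rw [zero_add])
    have hpa : powApp (T.shift lam) n (eVec u)
        = (⟨Stmt13Aux.Fr T lam u n, hml n⟩ : lp (fun _ : V => ℂ) 2) := by
      rw [powApp, dif_pos (hmem n)]
      exact hval
    rw [hpa, Stmt13Aux.nnnorm_Fr_elt T lam u n (hml n)]
    exact (hM n u).symm


end
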